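/- Let h : ℝ → ℝ be a C² function with h(x) > 0 for all x, solving the solitary-wave profile ODE on all of ℝ, and such that h(x) → H₀ and h'(x) → 0 as x → +∞. Then the first-integral identity holds at every point x ∈ ℝ: (c/3)·(c·H₀² − v♯∞·h(x)²)·(h'(x))² = (h(x) − H₀)²·(c² − g·h(x) − (h(x)·(h(x) + 2H₀)/H₀³)·E∞ − (h(x)²·(h(x) + H₀)²/H₀⁵)·(F∞/c)). -/

import Mathlib

open Filter

/-- First-integral identity for the solitary-wave profile ODE of the
Green–Naghdi equations with vorticity. -/
theorem first_integral_identity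
    (g H₀ c vs Einf Finf : ℝ) (hg : 0 < g) (hH : 0 < H₀) (hc : c ≠ 0)
    (h : ℝ → ℝ) (hC2 : ContDiff ℝ 2 h) (hpos : ∀ x, 0 < h x)
    (hode : ∀ x, (1/3) * c * (c * H₀ ^ 2 - vs * (h x) ^ 2) * deriv (deriv h) x =
      ((h x - H₀) / (2 * h x)) * (2 * c ^ 2 * H₀ - g * h x * (h x + H₀))
        - ((h x) ^ 3 / H₀ ^ 3 - 1) * Einf
        - 2 * (Finf / c) * (((h x) ^ 2 - H₀ ^ 2) * (h x) ^ 3 / H₀ ^ 5)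
        + (c ^ 2 / 3) * H₀ ^ 2 * (deriv h x) ^ 2 / h x)
    (hlim : Tendsto h atTop (nhds H₀))
    (hlim' : Tendsto (deriv h) atTop (nhds 0)) :
    ∀ x, (c / 3) * (c * H₀ ^ 2 - vs * (h x) ^ 2) * (deriv h x) ^ 2 =
      (h x - H₀) ^ 2 * (c ^ 2 - g * h x - (h x * (h x + 2 * H₀) / H₀ ^ 3) * Einf
        - ((h x) ^ 2 * (h x + H₀) ^ 2 / H₀ ^ 5) * (Finf / c)) := by
  have hH0 : H₀ ≠ 0 := ne_of_gt hH
  have hC1d : ContDiff ℝ 1 (deriv h) := by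
    have h2 : ContDiff ℝ ((1:ℕ)+1) h := by exact_mod_cast hC2
    exact (contDiff_succ_iff_deriv.mp h2).2.2
  have Hh : ∀ x, HasDerivAt h (deriv h x) x := fun x =>
    ((hC2.differentiable (by norm_num)) x).hasDerivAt
  have Hh' : ∀ x, HasDerivAt (deriv h) (deriv (deriv h) x) x := fun x =>
    ((hC1d.differentiable (by norm_num)) x).hasDerivAt
  -- the function G = LHS - RHS and ψ = G / h²
  set N : ℝ → ℝ := fun x =>
    (c / 3) * (c * H₀ ^ 2 - vs * (h x) ^ 2) * (deriv h x) ^ 2 -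
      (h x - H₀) ^ 2 * (c ^ 2 - g * h x - (h x * (h x + 2 * H₀) / H₀ ^ 3) * Einf
        - ((h x) ^ 2 * (h x + H₀) ^ 2 / H₀ ^ 5) * (Finf / c)) with hN
  set ψ : ℝ → ℝ := fun x => N x / (h x) ^ 2 with hψdef
  have hψ : ∀ x, HasDerivAt ψ 0 x := by
    intro x
    have hx0 : h x ≠ 0 := ne_of_gt (hpos x)
    -- derivative of the numerator
    have hNum : HasDerivAt N
        ((c / 3) * (-(vs * (2 * h x * deriv h x))) * (deriv h x) ^ 2
          + (c / 3) * (c * H₀ ^ 2 - vs * (h x) ^ 2) * (2 * deriv h x * deriv (deriv h) x)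
          - ((2 * (h x - H₀) * deriv h x) *
              (c ^ 2 - g * h x - (h x * (h x + 2 * H₀) / H₀ ^ 3) * Einf
                - ((h x) ^ 2 * (h x + H₀) ^ 2 / H₀ ^ 5) * (Finf / c))
            + (h x - H₀) ^ 2 *
              (-(g * deriv h x)
                - ((deriv h x * (h x + 2 * H₀) + h x * deriv h x) / H₀ ^ 3) * Einf
                - ((2 * h x * deriv h x * (h x + H₀) ^ 2
                    + (h x) ^ 2 * (2 * (h x + H₀) * deriv h x)) / H₀ ^ 5) * (Finf / c)))) x := by
      have t1 : HasDerivAt (fun y => (c / 3) * (c * H₀ ^ 2 - vs * (h y) ^ 2) * (deriv h y) ^ 2)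
          ((c / 3) * (-(vs * (2 * h x * deriv h x))) * (deriv h x) ^ 2
            + (c / 3) * (c * H₀ ^ 2 - vs * (h x) ^ 2) * (2 * deriv h x * deriv (deriv h) x)) x := by
        have a1 : HasDerivAt (fun y => (c / 3) * (c * H₀ ^ 2 - vs * (h y) ^ 2))
            ((c / 3) * (-(vs * (2 * h x * deriv h x)))) x := by
          have := ((hasDerivAt_const x (c * H₀ ^ 2)).sub (((Hh x).pow 2).const_mul vs)).const_mul
            (c / 3)
          exact this.congr_deriv (by push_cast; ring)
        have a2 : HasDerivAt (fun y => (deriv h y) ^ 2) (2 * deriv h x * deriv (deriv h) x) x := by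
          have := (Hh' x).pow 2
          exact this.congr_deriv (by push_cast; ring)
        have := a1.mul a2
        exact this.congr_deriv (by ring)
      have t2 : HasDerivAt (fun y => (h y - H₀) ^ 2) (2 * (h x - H₀) * deriv h x) x := by
        have := ((Hh x).sub_const H₀).pow 2
        exact this.congr_deriv (by push_cast; ring)
      have t3 : HasDerivAt (fun y =>
          c ^ 2 - g * h y - (h y * (h y + 2 * H₀) / H₀ ^ 3) * Einf
            - ((h y) ^ 2 * (h y + H₀) ^ 2 / H₀ ^ 5) * (Finf / c))
          (-(g * deriv h x)
            - ((deriv h x * (h x + 2 * H₀) + h x * deriv h x) / H₀ ^ 3) * Einf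
            - ((2 * h x * deriv h x * (h x + H₀) ^ 2
                + (h x) ^ 2 * (2 * (h x + H₀) * deriv h x)) / H₀ ^ 5) * (Finf / c)) x := by
        have b1 : HasDerivAt (fun y => c ^ 2 - g * h y) (-(g * deriv h x)) x := by
          have := (hasDerivAt_const x (c ^ 2)).sub ((Hh x).const_mul g)
          exact this.congr_deriv (by ring)
        have b2 : HasDerivAt (fun y => (h y * (h y + 2 * H₀) / H₀ ^ 3) * Einf)
            (((deriv h x * (h x + 2 * H₀) + h x * deriv h x) / H₀ ^ 3) * Einf) x := by
          have := ((((Hh x).mul ((Hh x).add_const (2 * H₀))).div_const (H₀ ^ 3)).mul_const Einf)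
          exact this.congr_deriv (by ring)
        have b3 : HasDerivAt (fun y => ((h y) ^ 2 * (h y + H₀) ^ 2 / H₀ ^ 5) * (Finf / c))
            (((2 * h x * deriv h x * (h x + H₀) ^ 2
              + (h x) ^ 2 * (2 * (h x + H₀) * deriv h x)) / H₀ ^ 5) * (Finf / c)) x := by
          have := (((((Hh x).pow 2).mul (((Hh x).add_const H₀).pow 2)).div_const
            (H₀ ^ 5)).mul_const (Finf / c))
          exact this.congr_deriv (by simp only [Pi.pow_apply]; push_cast; ring)
        exact (b1.sub b2).sub b3
      exact t1.sub (t2.mul t3)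
    have hDen : HasDerivAt (fun y => (h y) ^ 2) (2 * h x * deriv h x) x := by
      have := (Hh x).pow 2
      exact this.congr_deriv (by push_cast; ring)
    have hDen0 : (h x) ^ 2 ≠ 0 := pow_ne_zero 2 hx0
    have hdiv := hNum.div hDen hDen0
    refine hdiv.congr_deriv ?_
    rw [div_eq_zero_iff]
    left
    simp only [hN]
    have e := hode x
    field_simp at e ⊢
    ring_nf at e ⊢
    linear_combination (h x * deriv h x) * e
  -- ψ is constant
  have hconst : ∀ x y, ψ x = ψ y :=
    is_const_of_deriv_eq_zero (fun x => (hψ x).differentiableAt)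
      (fun x => (hψ x).deriv)
  -- ψ tends to 0 at +∞
  have tpair : Tendsto (fun x => (h x, deriv h x)) atTop (nhds (H₀, (0:ℝ))) :=
    hlim.prodMk_nhds hlim'
  have tψ : Tendsto ψ atTop (nhds 0) := by
    have hF : ContinuousAt (fun p : ℝ × ℝ =>
        ((c / 3) * (c * H₀ ^ 2 - vs * p.1 ^ 2) * p.2 ^ 2 -
          (p.1 - H₀) ^ 2 * (c ^ 2 - g * p.1 - (p.1 * (p.1 + 2 * H₀) / H₀ ^ 3) * Einf
            - (p.1 ^ 2 * (p.1 + H₀) ^ 2 / H₀ ^ 5) * (Finf / c))) / p.1 ^ 2) (H₀, 0) := by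
      apply ContinuousAt.div
      · fun_prop
      · fun_prop
      · positivity
    have := hF.tendsto.comp tpair
    simp only [Function.comp_def] at this
    convert this using 2
    norm_num
  have hzero : ∀ x, ψ x = 0 := by
    intro x
    have hcst : Tendsto ψ atTop (nhds (ψ x)) := by
      have : ψ = fun _ => ψ x := funext fun y => hconst y x
      rw [this]; exact tendsto_const_nhds
    have := tendsto_nhds_unique hcst tψ
    exact this
  intro x
  have hx0 : (h x) ^ 2 ≠ 0 := pow_ne_zero 2 (ne_of_gt (hpos x))
  have := hzero x
  rw [hψdef] at this
  simp only [div_eq_zero_iff, hx0, or_false] at this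
  have hN0 : N x = 0 := this
  rw [hN] at hN0
  linarith [hN0]
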